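/- Let 1 < p < ∞ and let Φ : (0,∞) → (0,∞) be an increasing function such that ‖S‖_{L^p(w)→L^{p,∞}(w)} ≤ Φ([w]_{A_p}) for every weight w on ℝ with [w]_{A_p} < ∞. Then there exist constants c > 0 and t_0 > 0, depending only on p, such that Φ(t) ≥ c·t^{1/2} for all t ≥ t_0. -/

import Mathlib

open MeasureTheory ENNReal NNReal Set

noncomputable section

namespace Paper1D

/-- The dyadic interval `[2^{-k} m, 2^{-k}(m+1))`. -/
def dyadicI (k m : ℤ) : Set ℝ := Set.Ico ((2:ℝ) ^ (-k) * m) ((2:ℝ) ^ (-k) * (m + 1))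

/-- The Haar function `h_I = |I|^{-1/2} (1_{I_-} - 1_{I_+})` of the dyadic
interval `I = [2^{-k} m, 2^{-k}(m+1))`. -/
def haar (k m : ℤ) (x : ℝ) : ℝ :=
  (2:ℝ) ^ ((k : ℝ) / 2) *
    (Set.indicator (Set.Ico ((2:ℝ) ^ (-k) * m) ((2:ℝ) ^ (-k) * (m + 1/2))) (fun _ => (1:ℝ)) x
      - Set.indicator (Set.Ico ((2:ℝ) ^ (-k) * (m + 1/2)) ((2:ℝ) ^ (-k) * (m + 1))) (fun _ => (1:ℝ)) x)

/-- The Haar square function `Sf = (∑_I (1_I/|I|) |⟨h_I, f⟩|²)^{1/2}`. -/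
def haarSq (f : ℝ → ℝ) (x : ℝ) : ℝ≥0∞ :=
  (∑' km : ℤ × ℤ, (dyadicI km.1 km.2).indicator
      (fun _ => (volume (dyadicI km.1 km.2))⁻¹ *
        (‖∫ y, haar km.1 km.2 y * f y‖₊ : ℝ≥0∞) ^ 2) x) ^ (1/2 : ℝ)

/-- `‖f‖_{L^p(w)} = (∫ |f|^p w)^{1/p}`. -/
def lpNorm1 (p : ℝ) (w : ℝ → ℝ≥0∞) (f : ℝ → ℝ) : ℝ≥0∞ :=
  (∫⁻ x, (‖f x‖₊ : ℝ≥0∞) ^ p * w x) ^ (1/p)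

/-- `‖g‖_{L^{p,∞}(w)} = sup_{t>0} t · w({g > t})^{1/p}`. -/
def wLpNorm1 (p : ℝ) (w : ℝ → ℝ≥0∞) (g : ℝ → ℝ≥0∞) : ℝ≥0∞ :=
  ⨆ (t : ℝ≥0) (_ : 0 < t), (t : ℝ≥0∞) * (∫⁻ x in {x | (t : ℝ≥0∞) < g x}, w x) ^ (1/p)

/-- `‖S‖_{L^p(w) → L^{p,∞}(w)}`, the least constant `C` such that
`‖Sf‖_{L^{p,∞}(w)} ≤ C ‖f‖_{L^p(w)}` for all `f ∈ L^p(w)`. -/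
def sqOpNorm (p : ℝ) (w : ℝ → ℝ≥0∞) : ℝ≥0∞ :=
  sInf {C : ℝ≥0∞ | ∀ f : ℝ → ℝ, Measurable f → lpNorm1 p w f ≠ ∞ →
    wLpNorm1 p w (haarSq f) ≤ C * lpNorm1 p w f}

/-- Average `⟨w⟩_I = |I|⁻¹ ∫_I w`. -/
def avg1 (w : ℝ → ℝ≥0∞) (I : Set ℝ) : ℝ≥0∞ := (volume I)⁻¹ * ∫⁻ x in I, w x

/-- The dyadic `A_p` characteristic, with the dual weight `σ = w^{1-p'}`. -/
def Ap1 (p : ℝ) (w : ℝ → ℝ≥0∞) : ℝ≥0∞ :=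
  ⨆ km : ℤ × ℤ, avg1 w (dyadicI km.1 km.2) *
    (avg1 (fun x => (w x) ^ (1 - p / (p - 1))) (dyadicI km.1 km.2)) ^ (p - 1)


def ind (a b : ℝ) : ℝ → ℝ := (Set.Ico a b).indicator (fun _ => (1:ℝ))

def tailC (N : ℕ) : ℝ≥0∞ := (N:ℝ≥0∞) * 2^((N:ℤ)-1)

def wN (N : ℕ) (x : ℝ) : ℝ≥0∞ :=
  (Set.Iio (0:ℝ)).indicator (fun _ => (1:ℝ≥0∞)) x
  + (Set.Ici (1:ℝ)).indicator (fun _ => (1:ℝ≥0∞)) x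
  + (Set.Ico (0:ℝ) ((2:ℝ)^(-(N:ℤ)))).indicator (fun _ => tailC N) x
  + ∑ n ∈ Finset.range N,
      (Set.Ico ((2:ℝ)^(-(n:ℤ)-1)) ((2:ℝ)^(-(n:ℤ)))).indicator (fun _ => (2:ℝ≥0∞)^(n:ℤ)) x

lemma two_zpow_pos (n : ℤ) : (0:ℝ) < 2 ^ n := zpow_pos two_pos n
lemma two_zpow_mono {m n : ℤ} (h : m ≤ n) : (2:ℝ)^m ≤ 2^n :=
  zpow_le_zpow_right₀ one_le_two h
lemma two_zpow_le_one (n : ℕ) : (2:ℝ)^(-(n:ℤ)) ≤ 1 := by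
  simpa using two_zpow_mono (show -(n:ℤ) ≤ 0 by omega)

lemma measurable_wN (N : ℕ) : Measurable (wN N) := by
  apply Measurable.add
  apply Measurable.add
  apply Measurable.add
  · exact (measurable_const.indicator measurableSet_Iio)
  · exact (measurable_const.indicator measurableSet_Ici)
  · exact (measurable_const.indicator measurableSet_Ico)
  · exact Finset.measurable_sum _ (fun n _ => measurable_const.indicator measurableSet_Ico)

lemma wN_of_neg (N : ℕ) {x : ℝ} (hx : x < 0) : wN N x = 1 := by
  unfold wN
  rw [Set.indicator_of_mem (show x ∈ Set.Iio (0:ℝ) from hx),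
    Set.indicator_of_notMem (by simp only [Set.mem_Ici, not_le]; linarith),
    Set.indicator_of_notMem (by simp only [Set.mem_Ico, not_and, not_lt]; intro h; linarith)]
  rw [Finset.sum_eq_zero, add_zero, add_zero, add_zero]
  intro n _
  apply Set.indicator_of_notMem
  simp only [Set.mem_Ico, not_and, not_lt]
  intro h
  exact absurd (lt_of_lt_of_le hx (le_trans (two_zpow_pos _).le h)) (lt_irrefl _)

lemma wN_of_one_le (N : ℕ) {x : ℝ} (hx : 1 ≤ x) : wN N x = 1 := by
  unfold wN
  rw [Set.indicator_of_notMem (show x ∉ Set.Iio (0:ℝ) by simp only [Set.mem_Iio, not_lt]; linarith),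
    Set.indicator_of_mem (show x ∈ Set.Ici (1:ℝ) from hx),
    Set.indicator_of_notMem (by
      simp only [Set.mem_Ico, not_and, not_lt]
      intro _
      exact le_trans (two_zpow_le_one N) hx)]
  rw [Finset.sum_eq_zero, add_zero, zero_add, add_zero]
  intro n _
  apply Set.indicator_of_notMem
  simp only [Set.mem_Ico, not_and, not_lt]
  intro _
  exact le_trans (two_zpow_le_one n) hx

lemma wN_of_tail (N : ℕ) {x : ℝ} (hx0 : 0 ≤ x) (hx : x < (2:ℝ)^(-(N:ℤ))) :
    wN N x = tailC N := by
  unfold wN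
  rw [Set.indicator_of_notMem (show x ∉ Set.Iio (0:ℝ) by simp only [Set.mem_Iio, not_lt]; linarith),
    Set.indicator_of_notMem (show x ∉ Set.Ici (1:ℝ) by
      simp only [Set.mem_Ici, not_le]
      exact lt_of_lt_of_le hx (two_zpow_le_one N)),
    Set.indicator_of_mem (show x ∈ Set.Ico (0:ℝ) ((2:ℝ)^(-(N:ℤ))) from ⟨hx0, hx⟩)]
  rw [Finset.sum_eq_zero, zero_add, zero_add, add_zero]
  intro n hn
  apply Set.indicator_of_notMem
  simp only [Set.mem_Ico, not_and, not_lt]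
  intro h
  exfalso
  have : (2:ℝ)^(-(N:ℤ)) ≤ 2^(-(n:ℤ)-1) := by
    apply two_zpow_mono
    have := Finset.mem_range.1 hn
    omega
  linarith

lemma wN_of_ring (N : ℕ) (n : ℕ) (hn : n < N) {x : ℝ}
    (hx0 : (2:ℝ)^(-(n:ℤ)-1) ≤ x) (hx : x < (2:ℝ)^(-(n:ℤ))) :
    wN N x = (2:ℝ≥0∞)^(n:ℤ) := by
  unfold wN
  have hxpos : 0 < x := lt_of_lt_of_le (two_zpow_pos _) hx0
  rw [Set.indicator_of_notMem (show x ∉ Set.Iio (0:ℝ) by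
      simp only [Set.mem_Iio, not_lt]; linarith),
    Set.indicator_of_notMem (show x ∉ Set.Ici (1:ℝ) by
      simp only [Set.mem_Ici, not_le]
      exact lt_of_lt_of_le hx (two_zpow_le_one n)),
    Set.indicator_of_notMem (show x ∉ Set.Ico (0:ℝ) ((2:ℝ)^(-(N:ℤ))) by
      simp only [Set.mem_Ico, not_and, not_lt]
      intro _
      exact le_trans (two_zpow_mono (by omega)) hx0)]
  rw [zero_add, zero_add, zero_add]
  rw [Finset.sum_eq_single n]
  · exact Set.indicator_of_mem (show x ∈ Set.Ico ((2:ℝ)^(-(n:ℤ)-1)) ((2:ℝ)^(-(n:ℤ))) from ⟨hx0, hx⟩) _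
  · intro m hm hmn
    apply Set.indicator_of_notMem
    simp only [Set.mem_Ico, not_and, not_lt]
    intro h
    rcases lt_or_gt_of_ne hmn with hlt | hgt
    · have : (2:ℝ)^(-(n:ℤ)) ≤ 2^(-(m:ℤ)-1) := two_zpow_mono (by omega)
      linarith
    · have h2 : (2:ℝ)^(-(m:ℤ)) ≤ 2^(-(n:ℤ)-1) := two_zpow_mono (by omega)
      linarith [le_trans h2 hx0]
  · intro hn'
    exact absurd (Finset.mem_range.2 hn) hn'

lemma setl {A : Set ℝ} (S : Set ℝ) (hA : MeasurableSet A) (c : ℝ≥0∞) :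
    ∫⁻ x in S, A.indicator (fun _ => c) x ∂volume = c * volume (A ∩ S) := by
  rw [lintegral_indicator₀ hA.nullMeasurableSet, setLIntegral_const, Measure.restrict_apply hA]

lemma setl_const {S : Set ℝ} (hS : MeasurableSet S) {f : ℝ → ℝ≥0∞} {c : ℝ≥0∞}
    (h : ∀ x ∈ S, f x = c) : ∫⁻ x in S, f x = c * volume S := by
  rw [setLIntegral_congr_fun hS h, setLIntegral_const]

/-- `e2 y = 2 ^ y` in `ℝ≥0∞`. -/
def e2 (y : ℝ) : ℝ≥0∞ := (2:ℝ≥0∞) ^ y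

lemma e2_ne_zero (y : ℝ) : e2 y ≠ 0 := by
  simp [e2, ENNReal.rpow_eq_zero_iff]
lemma e2_ne_top (y : ℝ) : e2 y ≠ ∞ := by
  simp [e2, ENNReal.rpow_eq_top_iff]
lemma e2_add (a b : ℝ) : e2 (a + b) = e2 a * e2 b :=
  ENNReal.rpow_add a b (by norm_num) (by norm_num)
lemma e2_zpow (z : ℤ) : (2:ℝ≥0∞) ^ z = e2 z := by
  rw [e2]; exact (ENNReal.rpow_intCast 2 z).symm
lemma ofReal_two_zpow (z : ℤ) : ENNReal.ofReal ((2:ℝ)^z) = e2 z := by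
  rw [show ((2:ℝ)^z) = (((2:ℝ≥0)^z : ℝ≥0) : ℝ) by rw [NNReal.coe_zpow]; norm_num,
    ENNReal.ofReal_coe_nnreal, ENNReal.coe_zpow (by norm_num : (2:ℝ≥0) ≠ 0),
    (by norm_num : ((2:ℝ≥0):ℝ≥0∞) = 2), e2_zpow]

lemma e2_mul_inv_self (y : ℝ) : e2 y * e2 (-y) = 1 := by
  rw [← e2_add]; simp [e2]

lemma ring_vol (n : ℤ) : volume (Set.Ico ((2:ℝ)^(n-1)) ((2:ℝ)^n)) = e2 (n-1 : ℤ) := by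
  rw [Real.volume_Ico]
  have h : (2:ℝ)^n - 2^(n-1) = 2^(n-1) := by
    have : (2:ℝ)^n = 2^(n-1) * 2 := by
      rw [← zpow_add_one₀ (two_ne_zero)]; ring_nf
    linarith
  rw [h, ofReal_two_zpow]

/-- expansion of the set-integral of `wN` -/
lemma wN_setLIntegral (N : ℕ) (S : Set ℝ) :
    ∫⁻ x in S, wN N x = volume (Set.Iio 0 ∩ S) + volume (Set.Ici 1 ∩ S)
      + tailC N * volume (Set.Ico (0:ℝ) ((2:ℝ)^(-(N:ℤ))) ∩ S)
      + ∑ n ∈ Finset.range N,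
          (2:ℝ≥0∞)^(n:ℤ) * volume (Set.Ico ((2:ℝ)^(-(n:ℤ)-1)) ((2:ℝ)^(-(n:ℤ))) ∩ S) := by
  unfold wN
  rw [lintegral_add_right _ (Finset.measurable_sum _
    (fun n _ => measurable_const.indicator measurableSet_Ico))]
  rw [lintegral_add_right _ (measurable_const.indicator measurableSet_Ico)]
  rw [lintegral_add_right _ (measurable_const.indicator measurableSet_Ici)]
  rw [lintegral_finset_sum' _ (fun n _ => (measurable_const.indicator measurableSet_Ico).aemeasurable)]
  rw [setl S measurableSet_Iio, setl S measurableSet_Ici, setl S measurableSet_Ico]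
  simp only [one_mul]
  congr 1
  exact Finset.sum_congr rfl (fun n _ => setl S measurableSet_Ico _)

lemma wN_int_Ico01 (N : ℕ) :
    ∫⁻ x in Set.Ico (0:ℝ) 1, wN N x = (N:ℝ≥0∞) := by
  rw [wN_setLIntegral]
  have h1 : Set.Iio (0:ℝ) ∩ Set.Ico 0 1 = ∅ := by
    ext x
    simp only [Set.mem_inter_iff, Set.mem_Iio, Set.mem_Ico, Set.mem_empty_iff_false, iff_false,
      not_and, not_lt]
    intro h h0; linarith
  have h2 : Set.Ici (1:ℝ) ∩ Set.Ico 0 1 = ∅ := by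
    ext x
    simp only [Set.mem_inter_iff, Set.mem_Ici, Set.mem_Ico, Set.mem_empty_iff_false, iff_false,
      not_and, not_lt]
    intro h h0; linarith
  have h3 : Set.Ico (0:ℝ) ((2:ℝ)^(-(N:ℤ))) ∩ Set.Ico 0 1 = Set.Ico (0:ℝ) ((2:ℝ)^(-(N:ℤ))) := by
    apply Set.inter_eq_left.2
    apply Set.Ico_subset_Ico le_rfl
    exact two_zpow_le_one N
  have h4 : ∀ n : ℕ, n < N →
      Set.Ico ((2:ℝ)^(-(n:ℤ)-1)) ((2:ℝ)^(-(n:ℤ))) ∩ Set.Ico 0 1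
        = Set.Ico ((2:ℝ)^(-(n:ℤ)-1)) ((2:ℝ)^(-(n:ℤ))) := by
    intro n _
    apply Set.inter_eq_left.2
    apply Set.Ico_subset_Ico (two_zpow_pos _).le (two_zpow_le_one n)
  rw [h1, h2, h3]
  simp only [measure_empty, add_zero, zero_add]
  have hring : ∀ n ∈ Finset.range N,
      (2:ℝ≥0∞)^(n:ℤ) * volume (Set.Ico ((2:ℝ)^(-(n:ℤ)-1)) ((2:ℝ)^(-(n:ℤ))) ∩ Set.Ico 0 1)
        = 2⁻¹ := by
    intro n hn
    rw [h4 n (Finset.mem_range.1 hn)]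
    have hv : volume (Set.Ico ((2:ℝ)^(-(n:ℤ)-1)) ((2:ℝ)^(-(n:ℤ)))) = e2 ((-(n:ℤ)-1 : ℤ)) := by
      have := ring_vol (-(n:ℤ))
      simpa using this
    rw [hv, e2_zpow, ← e2_add]
    have h5 : ((n:ℤ):ℝ) + (((-(n:ℤ)-1) : ℤ):ℝ) = (-1:ℝ) := by push_cast; ring
    rw [h5, e2]
    exact ENNReal.rpow_neg_one 2
  rw [Finset.sum_congr rfl hring]
  have hvol : volume (Set.Ico (0:ℝ) ((2:ℝ)^(-(N:ℤ)))) = e2 ((-(N:ℤ) : ℤ)) := by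
    rw [Real.volume_Ico, sub_zero, ofReal_two_zpow]
  rw [hvol]
  have htail : tailC N * e2 ((-(N:ℤ) : ℤ)) = (N:ℝ≥0∞) * 2⁻¹ := by
    unfold tailC
    rw [e2_zpow, mul_assoc, ← e2_add]
    have h6 : (((N:ℤ)-1 : ℤ):ℝ) + ((-(N:ℤ) : ℤ):ℝ) = (-1:ℝ) := by push_cast; ring
    rw [h6, e2]
    rw [ENNReal.rpow_neg_one]
  rw [htail, Finset.sum_const, Finset.card_range, nsmul_eq_mul, ← mul_add]
  have h7 : (2:ℝ≥0∞)⁻¹ + 2⁻¹ = 1 := by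
    rw [← two_mul]
    exact ENNReal.mul_inv_cancel (by norm_num) (by norm_num)
  rw [h7, mul_one]


lemma e2_neg (y : ℝ) : e2 (-y) = (e2 y)⁻¹ := ENNReal.rpow_neg 2 y
lemma e2_mono {a b : ℝ} (h : a ≤ b) : e2 a ≤ e2 b :=
  ENNReal.rpow_le_rpow_of_exponent_le one_le_two h
lemma e2_zero : e2 0 = 1 := ENNReal.rpow_zero
lemma e2_one_le {y : ℝ} (h : 0 ≤ y) : 1 ≤ e2 y := by
  rw [← e2_zero]; exact e2_mono h
lemma e2_le_one {y : ℝ} (h : y ≤ 0) : e2 y ≤ 1 := by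
  rw [← e2_zero]; exact e2_mono h
lemma e2_rpow (y z : ℝ) : (e2 y) ^ z = e2 (y * z) := (ENNReal.rpow_mul 2 y z).symm

lemma ico_disj (a b c : ℝ) : Disjoint (Set.Ico a b) (Set.Ico b c) := by
  rw [Set.disjoint_left]
  rintro x ⟨_, hxb⟩ ⟨hbx, _⟩
  exact absurd hbx (not_le.2 hxb)

def Dp (p : ℝ) : ℝ≥0∞ := e2 (1/(p-1)) + (1 - e2 (-(p/(p-1))))⁻¹
def Cp (p : ℝ) : ℝ≥0∞ := 2 * (Dp p + 1) ^ (p-1 : ℝ)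

section withp
variable {p : ℝ} (hp : 1 < p)
include hp

lemma hr_pos : 0 < 1/(p-1) := div_pos one_pos (by linarith)
lemma hq_pos : 0 < p/(p-1) := div_pos (by linarith) (by linarith)
lemma hq_eq : p/(p-1) = 1 + 1/(p-1) := by
  have h : p - 1 ≠ 0 := by linarith
  field_simp
  ring
lemma hE_eq : 1 - p/(p-1) = -(1/(p-1)) := by
  have h : p - 1 ≠ 0 := by linarith
  field_simp
  ring

lemma e2q_le_half : e2 (-(p/(p-1))) ≤ 2⁻¹ := by
  have h1 : -(p/(p-1)) ≤ -1 := by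
    have := hq_eq hp
    have := hr_pos hp
    nlinarith [hr_pos hp]
  calc e2 (-(p/(p-1))) ≤ e2 (-1) := e2_mono h1
  _ = 2⁻¹ := by rw [e2, ENNReal.rpow_neg_one]

lemma one_sub_e2q_mul : (1 - e2 (-(p/(p-1)))) * (1 - e2 (-(p/(p-1))))⁻¹ = 1 := by
  apply ENNReal.mul_inv_cancel
  · have h := e2q_le_half hp
    intro h0
    have : (1:ℝ≥0∞) ≤ e2 (-(p/(p-1))) := by
      rwa [tsub_eq_zero_iff_le] at h0
    have : (1:ℝ≥0∞) ≤ 2⁻¹ := this.trans h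
    norm_num at this
  · exact ne_top_of_le_ne_top one_ne_top tsub_le_self

lemma Dp_ne_top : Dp p ≠ ∞ := by
  unfold Dp
  apply ENNReal.add_ne_top.2
  constructor
  · exact e2_ne_top _
  · have h := e2q_le_half hp
    have h2 : (2:ℝ≥0∞)⁻¹ ≤ 1 - e2 (-(p/(p-1))) := by
      apply ENNReal.le_sub_of_add_le_right (e2_ne_top _)
      calc (2:ℝ≥0∞)⁻¹ + e2 (-(p/(p-1))) ≤ 2⁻¹ + 2⁻¹ := by gcongr
      _ = 1 := by rw [← two_mul]; exact ENNReal.mul_inv_cancel (by norm_num) (by norm_num)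
    have := ENNReal.inv_le_inv.2 h2
    simp only [inv_inv] at this
    exact ne_top_of_le_ne_top (by norm_num) this

lemma one_le_Dp : 1 ≤ Dp p := by
  unfold Dp
  calc (1:ℝ≥0∞) ≤ e2 (1/(p-1)) := e2_one_le (hr_pos hp).le
  _ ≤ _ := le_self_add

lemma Dp_rec : e2 (-(p/(p-1))) * Dp p + 2⁻¹ ≤ Dp p := by
  set a := e2 (-(p/(p-1))) with ha
  have ha1 : a ≤ 1 := e2_le_one (by linarith [hq_pos hp])
  set G := (1 - a)⁻¹ with hG
  have key : (1-a) * G = 1 := one_sub_e2q_mul hp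
  unfold Dp
  rw [← ha, ← hG, mul_add]
  have h1 : a * e2 (1/(p-1)) ≤ e2 (1/(p-1)) := by
    calc a * e2 (1/(p-1)) ≤ 1 * e2 (1/(p-1)) := by gcongr
    _ = _ := one_mul _
  have h2 : a * G + 2⁻¹ ≤ G := by
    calc a * G + 2⁻¹ ≤ a * G + (1-a) * G := by
          apply add_le_add_right
          rw [key]
          norm_num
    _ = (a + (1-a)) * G := by rw [add_mul]
    _ = 1 * G := by rw [add_tsub_cancel_of_le ha1]
    _ = G := one_mul G
  calc a * e2 (1/(p-1)) + a * G + 2⁻¹ ≤ e2 (1/(p-1)) + (a * G + 2⁻¹) := by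
        rw [add_assoc]; exact add_le_add_left h1 _
  _ ≤ e2 (1/(p-1)) + G := add_le_add_right h2 _

lemma one_le_Cp : 1 ≤ Cp p := by
  unfold Cp
  calc (1:ℝ≥0∞) = 1 * 1 := (one_mul 1).symm
  _ ≤ 2 * (Dp p + 1) ^ (p-1:ℝ) := by
      apply mul_le_mul' (by norm_num)
      calc (1:ℝ≥0∞) = 1 ^ (p-1:ℝ) := (ENNReal.one_rpow _).symm
      _ ≤ _ := ENNReal.rpow_le_rpow (le_add_self.trans (le_refl _)) (by linarith)

lemma Cp_ne_top : Cp p ≠ ∞ := by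
  unfold Cp
  apply ENNReal.mul_ne_top (by norm_num)
  apply ENNReal.rpow_ne_top_of_nonneg (by linarith)
  exact ENNReal.add_ne_top.2 ⟨Dp_ne_top hp, by norm_num⟩

omit hp in
/-- dual weight -/
lemma sig_ring (N : ℕ) {n : ℕ} (hn : n < N) {x : ℝ}
    (hx0 : (2:ℝ)^(-(n:ℤ)-1) ≤ x) (hx : x < (2:ℝ)^(-(n:ℤ))) :
    (wN N x) ^ (1 - p/(p-1)) = e2 ((n:ℝ) * (1 - p/(p-1))) := by
  rw [wN_of_ring N n hn hx0 hx, e2_zpow, e2_rpow]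
  norm_num

lemma sig_tail (N : ℕ) (hN : 1 ≤ N) {x : ℝ} (hx0 : 0 ≤ x) (hx : x < (2:ℝ)^(-(N:ℤ))) :
    (wN N x) ^ (1 - p/(p-1)) ≤ e2 (((N:ℝ) - 1) * (1 - p/(p-1))) := by
  rw [wN_of_tail N hx0 hx, hE_eq hp]
  have hbase : e2 ((N:ℝ) - 1) ≤ tailC N := by
    unfold tailC
    rw [show e2 ((N:ℝ)-1) = (2:ℝ≥0∞)^((N:ℤ)-1) by rw [e2_zpow]; congr 1; push_cast; ring]
    calc (2:ℝ≥0∞)^((N:ℤ)-1) = 1 * 2^((N:ℤ)-1) := (one_mul _).symm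
    _ ≤ (N:ℝ≥0∞) * 2^((N:ℤ)-1) :=
        mul_le_mul' (by exact_mod_cast Nat.one_le_cast.2 hN) (le_refl _)
  have h1 : tailC N ^ (-(1/(p-1))) = (tailC N ^ (1/(p-1)))⁻¹ := ENNReal.rpow_neg _ _
  have h2 : e2 (((N:ℝ) - 1) * -(1/(p-1))) = (e2 (((N:ℝ)-1) * (1/(p-1))))⁻¹ := by
    rw [show ((N:ℝ)-1) * -(1/(p-1)) = -(((N:ℝ)-1) * (1/(p-1))) by ring, e2_neg]
  rw [h1, h2, ENNReal.inv_le_inv, ← e2_rpow]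
  exact ENNReal.rpow_le_rpow hbase (hr_pos hp).le

omit hp in
lemma sig_one {x : ℝ} (N : ℕ) (hx : 1 ≤ x) : (wN N x) ^ (1 - p/(p-1)) = 1 := by
  rw [wN_of_one_le N hx, ENNReal.one_rpow]

lemma sig_int_bound (N : ℕ) (hN : 1 ≤ N) :
    ∀ j k : ℕ, k + j = N →
      ∫⁻ x in Set.Ico (0:ℝ) ((2:ℝ)^(-(k:ℤ))), (wN N x) ^ (1 - p/(p-1))
        ≤ e2 (-(p/(p-1)) * k) * Dp p := by
  intro j
  induction j with
  | zero =>
    intro k hk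
    simp only [Nat.add_zero] at hk
    subst hk
    have hconst : ∀ x ∈ Set.Ico (0:ℝ) ((2:ℝ)^(-(k:ℤ))),
        (wN k x) ^ (1 - p/(p-1)) ≤ e2 (((k:ℝ) - 1) * (1 - p/(p-1))) := by
      intro x hx
      exact sig_tail hp k hN hx.1 hx.2
    calc ∫⁻ x in Set.Ico (0:ℝ) ((2:ℝ)^(-(k:ℤ))), (wN k x) ^ (1 - p/(p-1))
        ≤ ∫⁻ _ in Set.Ico (0:ℝ) ((2:ℝ)^(-(k:ℤ))), e2 (((k:ℝ) - 1) * (1 - p/(p-1))) := by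
          apply setLIntegral_mono' measurableSet_Ico hconst
    _ = e2 (((k:ℝ) - 1) * (1 - p/(p-1))) * volume (Set.Ico (0:ℝ) ((2:ℝ)^(-(k:ℤ)))) := by
          rw [setLIntegral_const]
    _ = e2 (((k:ℝ) - 1) * (1 - p/(p-1))) * e2 (-(k:ℝ)) := by
          rw [Real.volume_Ico, sub_zero, ofReal_two_zpow]
          congr 2
          push_cast; ring
    _ = e2 (((k:ℝ) - 1) * (1 - p/(p-1)) + -(k:ℝ)) := (e2_add _ _).symm
    _ = e2 (-(p/(p-1)) * k + 1/(p-1)) := by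
          congr 1
          rw [hE_eq hp]
          have h : p - 1 ≠ 0 := by linarith
          field_simp
          ring
    _ = e2 (-(p/(p-1)) * k) * e2 (1/(p-1)) := e2_add _ _
    _ ≤ e2 (-(p/(p-1)) * k) * Dp p := by
          apply mul_le_mul' (le_refl _)
          unfold Dp
          exact le_self_add
  | succ j ih =>
    intro k hk
    have hkN : k < N := by omega
    have hsplit : Set.Ico (0:ℝ) ((2:ℝ)^(-(k:ℤ)))
        = Set.Ico (0:ℝ) ((2:ℝ)^(-(k:ℤ)-1)) ∪ Set.Ico ((2:ℝ)^(-(k:ℤ)-1)) ((2:ℝ)^(-(k:ℤ))) := by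
      rw [Set.Ico_union_Ico_eq_Ico (two_zpow_pos _).le (two_zpow_mono (by omega))]
    rw [hsplit, lintegral_union measurableSet_Ico (ico_disj _ _ _)]
    have hcast : (2:ℝ)^(-(k:ℤ)-1) = (2:ℝ)^(-((k+1:ℕ):ℤ)) := by
      congr 1; push_cast; ring
    have h1 : ∫⁻ x in Set.Ico (0:ℝ) ((2:ℝ)^(-(k:ℤ)-1)), (wN N x) ^ (1 - p/(p-1))
        ≤ e2 (-(p/(p-1)) * (k+1:ℝ)) * Dp p := by
      rw [hcast]
      have := ih (k+1) (by omega)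
      convert this using 3
      push_cast; ring
    have h2 : ∫⁻ x in Set.Ico ((2:ℝ)^(-(k:ℤ)-1)) ((2:ℝ)^(-(k:ℤ))), (wN N x) ^ (1 - p/(p-1))
        = e2 (-(p/(p-1)) * k) * 2⁻¹ := by
      rw [setl_const measurableSet_Ico (fun x hx => sig_ring N hkN hx.1 hx.2)]
      rw [show volume (Set.Ico ((2:ℝ)^(-(k:ℤ)-1)) ((2:ℝ)^(-(k:ℤ)))) = e2 ((-(k:ℤ)-1 : ℤ)) by
        simpa using ring_vol (-(k:ℤ))]
      rw [← e2_add]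
      rw [show ((k:ℝ) * (1 - p/(p-1)) + ((-(k:ℤ)-1 : ℤ):ℝ)) = -(p/(p-1)) * k + (-1) by
        have h : p - 1 ≠ 0 := by linarith
        push_cast
        field_simp
        ring]
      rw [e2_add]
      congr 1
      rw [e2, ENNReal.rpow_neg_one]
    rw [h2]
    calc _ ≤ e2 (-(p/(p-1)) * (k+1:ℝ)) * Dp p + e2 (-(p/(p-1)) * k) * 2⁻¹ :=
          add_le_add_left h1 _
    _ = e2 (-(p/(p-1)) * k) * (e2 (-(p/(p-1))) * Dp p) + e2 (-(p/(p-1)) * k) * 2⁻¹ := by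
          congr 1
          rw [← mul_assoc, ← e2_add]
          congr 2
          ring
    _ = e2 (-(p/(p-1)) * k) * (e2 (-(p/(p-1))) * Dp p + 2⁻¹) := by rw [mul_add]
    _ ≤ e2 (-(p/(p-1)) * k) * Dp p := mul_le_mul' (le_refl _) (Dp_rec hp)



omit hp in
lemma dyadic_vol (k m : ℤ) : volume (dyadicI k m) = e2 ((-k : ℤ)) := by
  rw [dyadicI, Real.volume_Ico,
    show (2:ℝ)^(-k)*((m:ℝ)+1) - 2^(-k)*m = 2^(-k) by ring, ofReal_two_zpow]

lemma term_of_const (N : ℕ) {k m : ℤ} {v : ℝ≥0∞} (hv0 : v ≠ 0) (hvt : v ≠ ∞)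
    (hc : ∀ x ∈ dyadicI k m, wN N x = v) :
    avg1 (wN N) (dyadicI k m)
      * (avg1 (fun x => wN N x ^ (1 - p/(p-1))) (dyadicI k m)) ^ (p-1 : ℝ) = 1 := by
  have hmeas : MeasurableSet (dyadicI k m) := measurableSet_Ico
  have hvol : volume (dyadicI k m) = e2 ((-k:ℤ)) := dyadic_vol k m
  have havg : avg1 (wN N) (dyadicI k m) = v := by
    unfold avg1
    rw [setl_const hmeas hc, hvol, mul_comm v, ← mul_assoc,
      ENNReal.inv_mul_cancel (e2_ne_zero _) (e2_ne_top _), one_mul]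
  have havgs : avg1 (fun x => wN N x ^ (1 - p/(p-1))) (dyadicI k m) = v ^ (1 - p/(p-1)) := by
    unfold avg1
    rw [setl_const hmeas (fun x hx => by rw [hc x hx]), hvol, mul_comm _ (e2 _), ← mul_assoc,
      ENNReal.inv_mul_cancel (e2_ne_zero _) (e2_ne_top _), one_mul]
  rw [havg, havgs, ← ENNReal.rpow_mul]
  have hm1 : (1 - p/(p-1)) * (p-1) = -1 := by
    have h : p - 1 ≠ 0 := by linarith
    field_simp
    ring
  rw [hm1, ENNReal.rpow_neg_one]
  exact ENNReal.mul_inv_cancel hv0 hvt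

omit hp in
lemma dyadicI_zero (k : ℤ) : dyadicI k 0 = Set.Ico (0:ℝ) ((2:ℝ)^(-k)) := by
  unfold dyadicI; norm_num

omit hp in
lemma two_zpow_add (a b : ℤ) : (2:ℝ)^(a+b) = 2^a * 2^b := zpow_add₀ two_ne_zero a b

omit hp in
lemma tailC_ne_zero (N : ℕ) (hN : 1 ≤ N) : tailC N ≠ 0 := by
  unfold tailC
  apply mul_ne_zero
  · exact Nat.cast_ne_zero.2 (by omega)
  · rw [e2_zpow]; exact e2_ne_zero _

omit hp in
lemma tailC_ne_top (N : ℕ) : tailC N ≠ ∞ := by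
  unfold tailC
  apply ENNReal.mul_ne_top (natCast_ne_top N)
  rw [e2_zpow]; exact e2_ne_top _

lemma Dp_pow_le_Cp : (Dp p) ^ (p-1:ℝ) ≤ Cp p := by
  unfold Cp
  calc (Dp p)^(p-1:ℝ) ≤ (Dp p + 1)^(p-1:ℝ) :=
        ENNReal.rpow_le_rpow le_self_add (by linarith)
  _ = 1 * (Dp p + 1)^(p-1:ℝ) := (one_mul _).symm
  _ ≤ 2 * (Dp p + 1)^(p-1:ℝ) := mul_le_mul' (by norm_num) (le_refl _)

lemma Ap1_wN_le (N : ℕ) (hN : 1 ≤ N) : Ap1 p (wN N) ≤ (N:ℝ≥0∞) * Cp p := by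
  have hp1 : (0:ℝ) ≤ p - 1 := by linarith
  have hNC1 : (1:ℝ≥0∞) ≤ (N:ℝ≥0∞) * Cp p := by
    calc (1:ℝ≥0∞) = 1 * 1 := (one_mul 1).symm
    _ ≤ (N:ℝ≥0∞) * Cp p := mul_le_mul' (by exact_mod_cast hN) (one_le_Cp hp)
  apply iSup_le
  rintro ⟨k, m⟩
  simp only
  rcases lt_trichotomy m 0 with hm | hm | hm
  · -- m < 0
    have hconst : ∀ x ∈ dyadicI k m, wN N x = 1 := by
      rintro x ⟨_, hx2⟩
      apply wN_of_neg
      have hm1 : (m:ℝ) + 1 ≤ 0 := by exact_mod_cast (by omega : m + 1 ≤ 0)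
      have : (2:ℝ)^(-k) * ((m:ℝ)+1) ≤ 0 :=
        mul_nonpos_iff.2 (Or.inl ⟨(two_zpow_pos (-k)).le, hm1⟩)
      linarith
    rw [term_of_const hp N one_ne_zero one_ne_top hconst]
    exact hNC1
  · -- m = 0
    subst hm
    rcases le_or_gt (N:ℤ) k with hkN | hkN
    · -- deep tail: constant
      have hconst : ∀ x ∈ dyadicI k 0, wN N x = tailC N := by
        intro x hx
        rw [dyadicI_zero] at hx
        apply wN_of_tail N hx.1
        calc x < (2:ℝ)^(-k) := hx.2
        _ ≤ 2^(-(N:ℤ)) := two_zpow_mono (by omega)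
      rw [term_of_const hp N (tailC_ne_zero N hN) (tailC_ne_top N) hconst]
      exact hNC1
    rcases le_or_gt 0 k with hk0 | hk0
    · -- main case 0 ≤ k < N
      lift k to ℕ using hk0 with kn
      have hknN : kn < N := by exact_mod_cast hkN
      have hvol : (volume (dyadicI (kn:ℤ) 0))⁻¹ = e2 (kn:ℝ) := by
        rw [dyadic_vol, ← e2_neg]
        congr 1
        push_cast; ring
      have havgw : avg1 (wN N) (dyadicI (kn:ℤ) 0) ≤ e2 (kn:ℝ) * (N:ℝ≥0∞) := by
        unfold avg1
        rw [hvol]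
        apply mul_le_mul' (le_refl _)
        calc ∫⁻ x in dyadicI (kn:ℤ) 0, wN N x ≤ ∫⁻ x in Set.Ico (0:ℝ) 1, wN N x := by
              apply lintegral_mono_set
              rw [dyadicI_zero]
              exact Set.Ico_subset_Ico (le_refl _) (two_zpow_le_one kn)
        _ = (N:ℝ≥0∞) := wN_int_Ico01 N
      have havgs : avg1 (fun x => wN N x ^ (1 - p/(p-1))) (dyadicI (kn:ℤ) 0)
          ≤ e2 ((kn:ℝ) * (1 - p/(p-1))) * Dp p := by
        unfold avg1
        rw [hvol]
        calc e2 (kn:ℝ) * ∫⁻ x in dyadicI (kn:ℤ) 0, wN N x ^ (1 - p/(p-1))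
            ≤ e2 (kn:ℝ) * (e2 (-(p/(p-1)) * kn) * Dp p) := by
              apply mul_le_mul' (le_refl _)
              rw [dyadicI_zero]
              exact sig_int_bound hp N hN (N - kn) kn (by omega)
        _ = e2 ((kn:ℝ) + -(p/(p-1)) * kn) * Dp p := by rw [e2_add, mul_assoc]
        _ = e2 ((kn:ℝ) * (1 - p/(p-1))) * Dp p := by congr 2; ring
      calc avg1 (wN N) (dyadicI (kn:ℤ) 0)
            * (avg1 (fun x => wN N x ^ (1 - p/(p-1))) (dyadicI (kn:ℤ) 0)) ^ (p-1:ℝ)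
          ≤ (e2 (kn:ℝ) * (N:ℝ≥0∞)) * ((e2 ((kn:ℝ) * (1 - p/(p-1))) * Dp p) ^ (p-1:ℝ)) :=
            mul_le_mul' havgw (ENNReal.rpow_le_rpow havgs hp1)
      _ = (e2 (kn:ℝ) * (N:ℝ≥0∞)) * (e2 ((kn:ℝ) * (1 - p/(p-1)) * (p-1)) * (Dp p) ^ (p-1:ℝ)) := by
            rw [ENNReal.mul_rpow_of_ne_top (e2_ne_top _) (Dp_ne_top hp), e2_rpow]
      _ = (e2 (kn:ℝ) * (N:ℝ≥0∞)) * (e2 (-(kn:ℝ)) * (Dp p) ^ (p-1:ℝ)) := by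
            have h : p - 1 ≠ 0 := by linarith
            have hexp : (kn:ℝ) * (1 - p/(p-1)) * (p-1) = -(kn:ℝ) := by
              rw [hE_eq hp]
              field_simp
            rw [hexp]
      _ = (e2 (kn:ℝ) * e2 (-(kn:ℝ))) * ((N:ℝ≥0∞) * (Dp p) ^ (p-1:ℝ)) := by ring
      _ = (N:ℝ≥0∞) * (Dp p) ^ (p-1:ℝ) := by rw [e2_mul_inv_self, one_mul]
      _ ≤ (N:ℝ≥0∞) * Cp p := mul_le_mul' (le_refl _) (Dp_pow_le_Cp hp)
    · -- k < 0
      have h1le : (1:ℝ) ≤ (2:ℝ)^(-k) := by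
        calc (1:ℝ) = 2^(0:ℤ) := by norm_num
        _ ≤ 2^(-k) := two_zpow_mono (by omega)
      have hsplit : Set.Ico (0:ℝ) ((2:ℝ)^(-k)) = Set.Ico (0:ℝ) 1 ∪ Set.Ico 1 ((2:ℝ)^(-k)) := by
        rw [Set.Ico_union_Ico_eq_Ico (by norm_num) h1le]
      have hvol : (volume (dyadicI k 0))⁻¹ = e2 (k:ℝ) := by
        rw [dyadic_vol, ← e2_neg]
        congr 1
        push_cast; ring
      have hek : e2 (k:ℝ) ≤ 1 := e2_le_one (by exact_mod_cast hk0.le)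
      have hcancel : e2 (k:ℝ) * e2 (-(k:ℝ)) = 1 := e2_mul_inv_self _
      have hofr : ENNReal.ofReal ((2:ℝ)^(-k) - 1) ≤ e2 (-(k:ℝ)) := by
        calc ENNReal.ofReal ((2:ℝ)^(-k) - 1) ≤ ENNReal.ofReal ((2:ℝ)^(-k)) :=
              ENNReal.ofReal_le_ofReal (by linarith)
        _ = e2 ((-k : ℤ)) := ofReal_two_zpow (-k)
        _ = e2 (-(k:ℝ)) := by congr 1; push_cast; ring
      have hvol2 : volume (Set.Ico (1:ℝ) ((2:ℝ)^(-k))) = ENNReal.ofReal ((2:ℝ)^(-k) - 1) :=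
        Real.volume_Ico
      have havgw : avg1 (wN N) (dyadicI k 0) ≤ 2 * (N:ℝ≥0∞) := by
        unfold avg1
        rw [hvol, dyadicI_zero, hsplit, lintegral_union measurableSet_Ico (ico_disj _ _ _)]
        have hw2 : ∫⁻ x in Set.Ico (1:ℝ) ((2:ℝ)^(-k)), wN N x
            = ENNReal.ofReal ((2:ℝ)^(-k) - 1) := by
          rw [setl_const measurableSet_Ico (fun x hx => wN_of_one_le N hx.1), one_mul, hvol2]
        rw [wN_int_Ico01 N, hw2]
        calc e2 (k:ℝ) * ((N:ℝ≥0∞) + ENNReal.ofReal ((2:ℝ)^(-k) - 1))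
            ≤ e2 (k:ℝ) * (N:ℝ≥0∞) + e2 (k:ℝ) * e2 (-(k:ℝ)) := by
              rw [mul_add]
              exact add_le_add_right (mul_le_mul' (le_refl _) hofr) _
        _ ≤ 1 * (N:ℝ≥0∞) + 1 := by
              rw [hcancel]
              exact add_le_add_left (mul_le_mul' hek (le_refl _)) _
        _ = (N:ℝ≥0∞) + 1 := by rw [one_mul]
        _ ≤ (N:ℝ≥0∞) + (N:ℝ≥0∞) := add_le_add_right (by exact_mod_cast hN) _
        _ = 2 * (N:ℝ≥0∞) := (two_mul _).symm
      have havgs : avg1 (fun x => wN N x ^ (1 - p/(p-1))) (dyadicI k 0) ≤ Dp p + 1 := by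
        unfold avg1
        rw [hvol, dyadicI_zero, hsplit, lintegral_union measurableSet_Ico (ico_disj _ _ _)]
        have hs1 : ∫⁻ x in Set.Ico (0:ℝ) 1, wN N x ^ (1 - p/(p-1)) ≤ Dp p := by
          have := sig_int_bound hp N hN N 0 (by omega)
          simp only [Nat.cast_zero, neg_zero, mul_zero, zero_mul] at this
          calc ∫⁻ x in Set.Ico (0:ℝ) 1, wN N x ^ (1 - p/(p-1))
              = ∫⁻ x in Set.Ico (0:ℝ) ((2:ℝ)^(-(0:ℤ))), wN N x ^ (1 - p/(p-1)) := by norm_num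
          _ ≤ e2 (-(p/(p-1)) * (0:ℕ)) * Dp p := sig_int_bound hp N hN N 0 (by omega)
          _ = Dp p := by
              rw [show (-(p/(p-1)) * ((0:ℕ):ℝ)) = 0 by push_cast; ring, e2_zero, one_mul]
        have hs2 : ∫⁻ x in Set.Ico (1:ℝ) ((2:ℝ)^(-k)), wN N x ^ (1 - p/(p-1))
            = ENNReal.ofReal ((2:ℝ)^(-k) - 1) := by
          rw [setl_const measurableSet_Ico (fun x hx => sig_one N hx.1), one_mul, hvol2]
        calc e2 (k:ℝ) * ((∫⁻ x in Set.Ico (0:ℝ) 1, wN N x ^ (1 - p/(p-1)))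
              + ∫⁻ x in Set.Ico (1:ℝ) ((2:ℝ)^(-k)), wN N x ^ (1 - p/(p-1)))
            ≤ e2 (k:ℝ) * (Dp p + e2 (-(k:ℝ))) := by
              apply mul_le_mul' (le_refl _)
              rw [hs2]
              exact add_le_add hs1 hofr
        _ = e2 (k:ℝ) * Dp p + e2 (k:ℝ) * e2 (-(k:ℝ)) := by rw [mul_add]
        _ ≤ 1 * Dp p + 1 := by
              rw [hcancel]
              exact add_le_add_left (mul_le_mul' hek (le_refl _)) _
        _ = Dp p + 1 := by rw [one_mul]
      calc avg1 (wN N) (dyadicI k 0)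
            * (avg1 (fun x => wN N x ^ (1 - p/(p-1))) (dyadicI k 0)) ^ (p-1:ℝ)
          ≤ (2 * (N:ℝ≥0∞)) * (Dp p + 1) ^ (p-1:ℝ) :=
            mul_le_mul' havgw (ENNReal.rpow_le_rpow havgs hp1)
      _ = (N:ℝ≥0∞) * Cp p := by
            unfold Cp
            ring
  · -- m ≥ 1
    lift m to ℕ using hm.le with mn
    have hm1 : 1 ≤ mn := by exact_mod_cast hm
    set j : ℕ := Nat.log 2 mn with hj
    have hlow : (2:ℕ)^j ≤ mn := Nat.pow_log_le_self 2 (by omega)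
    have hhigh : mn < 2^(j+1) := Nat.lt_pow_succ_log_self (by norm_num) _
    have hlowR : (2:ℝ)^(j:ℤ) ≤ (mn:ℝ) := by
      rw [zpow_natCast]
      exact_mod_cast hlow
    have hhighR : (mn:ℝ) + 1 ≤ (2:ℝ)^((j:ℤ)+1) := by
      rw [show ((j:ℤ)+1) = ((j+1 : ℕ) : ℤ) by push_cast; ring, zpow_natCast]
      exact_mod_cast hhigh
    have hsub : dyadicI k mn ⊆ Set.Ico ((2:ℝ)^((j:ℤ)-k)) ((2:ℝ)^((j:ℤ)+1-k)) := by
      rintro x ⟨hx1, hx2⟩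
      constructor
      · calc (2:ℝ)^((j:ℤ)-k) = 2^(-k) * 2^(j:ℤ) := by
              rw [← two_zpow_add]; congr 1; ring
        _ ≤ 2^(-k) * (mn:ℝ) := mul_le_mul_of_nonneg_left hlowR (two_zpow_pos (-k)).le
        _ ≤ x := hx1
      · calc x < 2^(-k) * ((mn:ℝ)+1) := hx2
        _ ≤ 2^(-k) * 2^((j:ℤ)+1) := mul_le_mul_of_nonneg_left hhighR (two_zpow_pos (-k)).le
        _ = 2^((j:ℤ)+1-k) := by rw [← two_zpow_add]; congr 1; ring
    set K : ℤ := k - j - 1 with hK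
    have hKlow : (j:ℤ) - k = -K - 1 := by omega
    have hKhigh : (j:ℤ) + 1 - k = -K := by omega
    rw [hKlow, hKhigh] at hsub
    rcases lt_or_ge K 0 with hK0 | hK0
    · -- region in [1,∞)
      have hconst : ∀ x ∈ dyadicI k mn, wN N x = 1 := by
        intro x hx
        apply wN_of_one_le
        have := (hsub hx).1
        calc (1:ℝ) = 2^(0:ℤ) := by norm_num
        _ ≤ 2^(-K-1) := two_zpow_mono (by omega)
        _ ≤ x := this
      rw [term_of_const hp N one_ne_zero one_ne_top hconst]
      exact hNC1
    rcases lt_or_ge K (N:ℤ) with hKN | hKN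
    · -- region is a ring
      lift K to ℕ using hK0 with Kn
      have hKnN : Kn < N := by exact_mod_cast hKN
      have hsub' : dyadicI k mn ⊆ Set.Ico ((2:ℝ)^(-(Kn:ℤ)-1)) ((2:ℝ)^(-(Kn:ℤ))) := hsub
      have hconst : ∀ x ∈ dyadicI k mn, wN N x = (2:ℝ≥0∞)^(Kn:ℤ) := by
        intro x hx
        exact wN_of_ring N Kn hKnN (hsub' hx).1 (hsub' hx).2
      rw [term_of_const hp N (by rw [e2_zpow]; exact e2_ne_zero _)
        (by rw [e2_zpow]; exact e2_ne_top _) hconst]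
      exact hNC1
    · -- region in tail
      have hconst : ∀ x ∈ dyadicI k mn, wN N x = tailC N := by
        intro x hx
        have h1 := (hsub hx).1
        have h2 := (hsub hx).2
        apply wN_of_tail N
        · exact le_trans (two_zpow_pos _).le h1
        · calc x < (2:ℝ)^(-K) := h2
          _ ≤ 2^(-(N:ℤ)) := two_zpow_mono (by omega)
      rw [term_of_const hp N (tailC_ne_zero N hN) (tailC_ne_top N) hconst]
      exact hNC1

lemma one_le_Ap1_wN (N : ℕ) : 1 ≤ Ap1 p (wN N) := by
  have hconst : ∀ x ∈ dyadicI 0 1, wN N x = 1 := by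
    rintro x ⟨hx1, _⟩
    apply wN_of_one_le
    simpa using hx1
  have := term_of_const hp N one_ne_zero one_ne_top hconst
  calc (1:ℝ≥0∞) = avg1 (wN N) (dyadicI 0 1)
      * (avg1 (fun x => wN N x ^ (1 - p/(p-1))) (dyadicI 0 1)) ^ (p-1:ℝ) := this.symm
  _ ≤ Ap1 p (wN N) := le_iSup_of_le ((0:ℤ), (1:ℤ)) (le_refl _)



omit hp in
lemma ind_integrable (a b : ℝ) : Integrable (ind a b) := by
  unfold ind
  rw [integrable_indicator_iff measurableSet_Ico]
  exact integrableOn_const measure_Ico_lt_top.ne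

omit hp in
lemma measurable_ind (a b : ℝ) : Measurable (ind a b) :=
  measurable_const.indicator measurableSet_Ico

omit hp in
lemma ind_mul_ind (a b c d : ℝ) (y : ℝ) :
    ind a b y * ind c d y = ind (max a c) (min b d) y := by
  unfold ind
  rw [← Set.Ico_inter_Ico]
  by_cases h1 : y ∈ Set.Ico a b <;> by_cases h2 : y ∈ Set.Ico c d
  · rw [Set.indicator_of_mem h1, Set.indicator_of_mem h2,
      Set.indicator_of_mem (Set.mem_inter h1 h2)]
    norm_num
  · rw [Set.indicator_of_mem h1, Set.indicator_of_notMem h2,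
      Set.indicator_of_notMem (fun h => h2 h.2)]
    norm_num
  · rw [Set.indicator_of_notMem h1, Set.indicator_of_mem h2,
      Set.indicator_of_notMem (fun h => h1 h.1)]
    norm_num
  · rw [Set.indicator_of_notMem h1, Set.indicator_of_notMem h2,
      Set.indicator_of_notMem (fun h => h1 h.1)]
    norm_num

omit hp in
lemma integral_ind (a b : ℝ) : ∫ y, ind a b y = max (b - a) 0 := by
  unfold ind
  rw [MeasureTheory.integral_indicator measurableSet_Ico, MeasureTheory.setIntegral_const,
    Real.volume_real_Ico, smul_eq_mul, mul_one]

omit hp in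
lemma ind_of_mem {a b y : ℝ} (h1 : a ≤ y) (h2 : y < b) : ind a b y = 1 :=
  Set.indicator_of_mem (show y ∈ Set.Ico a b from ⟨h1, h2⟩) _

omit hp in
lemma ind_of_not_mem {a b y : ℝ} (h : ¬ (a ≤ y ∧ y < b)) : ind a b y = 0 :=
  Set.indicator_of_notMem (fun hm => h ⟨hm.1, hm.2⟩) _

/-- the building block `g = 1_{[a,b)} - 1_{[b,c)}` -/
def gg (a b c : ℝ) : ℝ → ℝ := fun y => ind a b y - ind b c y

omit hp in
lemma gg_integrable (a b c : ℝ) : Integrable (gg a b c) :=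
  (ind_integrable a b).sub (ind_integrable b c)

omit hp in
lemma gg_measurable (a b c : ℝ) : Measurable (gg a b c) :=
  (measurable_ind a b).sub (measurable_ind b c)

omit hp in
lemma gg_abs_le (a b c y : ℝ) : ‖gg a b c y‖ ≤ 1 := by
  unfold gg ind
  by_cases h1 : y ∈ Set.Ico a b <;> by_cases h2 : y ∈ Set.Ico b c <;>
    simp [Set.indicator_apply, h1, h2]

omit hp in
lemma gg_mul_integrable (a b c a' b' c' : ℝ) :
    Integrable (fun y => gg a b c y * gg a' b' c' y) :=
  (gg_integrable a' b' c').bdd_mul (gg_measurable a b c).aestronglyMeasurable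
    (Filter.Eventually.of_forall (fun y => gg_abs_le a b c y))

omit hp in
lemma integral_gg (a b c : ℝ) : ∫ y, gg a b c y = max (b - a) 0 - max (c - b) 0 := by
  unfold gg
  rw [integral_sub (ind_integrable a b) (ind_integrable b c), integral_ind, integral_ind]

omit hp in
lemma gg_value_zero (a b c : ℝ) {y : ℝ} (hy : ¬ (a ≤ y ∧ y < c)) (hab : a ≤ b) (hbc : b ≤ c) :
    gg a b c y = 0 := by
  unfold gg
  rw [ind_of_not_mem, ind_of_not_mem]
  · ring
  · intro ⟨hb, hc⟩; exact hy ⟨le_trans hab hb, hc⟩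
  · intro ⟨ha, hb⟩; exact hy ⟨ha, lt_of_lt_of_le hb hbc⟩

omit hp in
lemma gg_value_one (a b c : ℝ) {y : ℝ} (h1 : a ≤ y) (h2 : y < b) (hbc : b ≤ c) :
    gg a b c y = 1 := by
  unfold gg
  rw [ind_of_mem h1 h2, ind_of_not_mem (fun h => absurd h2 (not_lt.2 h.1))]
  ring

omit hp in
lemma gg_value_negone (a b c : ℝ) {y : ℝ} (h1 : b ≤ y) (h2 : y < c) (hab : a ≤ b) :
    gg a b c y = -1 := by
  unfold gg
  rw [ind_of_mem h1 h2, ind_of_not_mem (fun h => absurd h1 (not_le.2 h.2))]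
  ring

omit hp in
lemma gg_orth {i j : ℕ} (hij : i ≠ j) :
    ∫ y, gg 0 ((2:ℝ)^(-(j:ℤ)-1)) ((2:ℝ)^(-(j:ℤ))) y
      * gg 0 ((2:ℝ)^(-(i:ℤ)-1)) ((2:ℝ)^(-(i:ℤ))) y = 0 := by
  have hdouble : ∀ n : ℕ, (2:ℝ)^(-(n:ℤ)) = 2^(-(n:ℤ)-1) + 2^(-(n:ℤ)-1) := by
    intro n
    rw [show (-(n:ℤ)) = (-(n:ℤ)-1) + 1 by ring, zpow_add_one₀ two_ne_zero]
    ring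
  have hbc : ∀ n : ℕ, (2:ℝ)^(-(n:ℤ)-1) ≤ 2^(-(n:ℤ)) := fun n => two_zpow_mono (by omega)
  have hpos : ∀ n : ℕ, (0:ℝ) < 2^(-(n:ℤ)-1) := fun n => two_zpow_pos _
  rcases lt_or_gt_of_ne hij with h | h
  · -- i < j : g_i ≡ 1 on supp g_j
    have hsupp : (2:ℝ)^(-(j:ℤ)) ≤ 2^(-(i:ℤ)-1) := two_zpow_mono (by omega)
    have hpt : ∀ y, gg 0 ((2:ℝ)^(-(j:ℤ)-1)) ((2:ℝ)^(-(j:ℤ))) y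
        * gg 0 ((2:ℝ)^(-(i:ℤ)-1)) ((2:ℝ)^(-(i:ℤ))) y
        = gg 0 ((2:ℝ)^(-(j:ℤ)-1)) ((2:ℝ)^(-(j:ℤ))) y := by
      intro y
      by_cases hy : 0 ≤ y ∧ y < (2:ℝ)^(-(j:ℤ))
      · rw [gg_value_one 0 _ _ hy.1 (lt_of_lt_of_le hy.2 hsupp) (hbc i), mul_one]
      · rw [gg_value_zero 0 _ _ hy (hpos j).le (hbc j), zero_mul]
    simp only [hpt]
    rw [integral_gg]
    have := hdouble j
    have h1 := hpos j
    rw [sub_zero, max_eq_left (hpos j).le, max_eq_left (by linarith)]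
    linarith
  · -- i > j : g_j ≡ 1 on supp g_i
    have hsupp : (2:ℝ)^(-(i:ℤ)) ≤ 2^(-(j:ℤ)-1) := two_zpow_mono (by omega)
    have hpt : ∀ y, gg 0 ((2:ℝ)^(-(j:ℤ)-1)) ((2:ℝ)^(-(j:ℤ))) y
        * gg 0 ((2:ℝ)^(-(i:ℤ)-1)) ((2:ℝ)^(-(i:ℤ))) y
        = gg 0 ((2:ℝ)^(-(i:ℤ)-1)) ((2:ℝ)^(-(i:ℤ))) y := by
      intro y
      by_cases hy : 0 ≤ y ∧ y < (2:ℝ)^(-(i:ℤ))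
      · rw [gg_value_one 0 _ _ hy.1 (lt_of_lt_of_le hy.2 hsupp) (hbc j), one_mul]
      · rw [gg_value_zero 0 _ _ hy (hpos i).le (hbc i), mul_zero]
    simp only [hpt]
    rw [integral_gg]
    have := hdouble i
    have h1 := hpos i
    rw [sub_zero, max_eq_left (hpos i).le, max_eq_left (by linarith)]
    linarith

omit hp in
lemma gg_self (j : ℕ) :
    ∫ y, gg 0 ((2:ℝ)^(-(j:ℤ)-1)) ((2:ℝ)^(-(j:ℤ))) y
      * gg 0 ((2:ℝ)^(-(j:ℤ)-1)) ((2:ℝ)^(-(j:ℤ))) y = (2:ℝ)^(-(j:ℤ)) := by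
  have hbc : (2:ℝ)^(-(j:ℤ)-1) ≤ 2^(-(j:ℤ)) := two_zpow_mono (by omega)
  have hpos : (0:ℝ) < 2^(-(j:ℤ)-1) := two_zpow_pos _
  have hpt : ∀ y, gg 0 ((2:ℝ)^(-(j:ℤ)-1)) ((2:ℝ)^(-(j:ℤ))) y
      * gg 0 ((2:ℝ)^(-(j:ℤ)-1)) ((2:ℝ)^(-(j:ℤ))) y = ind 0 ((2:ℝ)^(-(j:ℤ))) y := by
    intro y
    by_cases hy : 0 ≤ y ∧ y < (2:ℝ)^(-(j:ℤ))
    · rcases lt_or_ge y ((2:ℝ)^(-(j:ℤ)-1)) with hyb | hyb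
      · rw [gg_value_one 0 _ _ hy.1 hyb hbc, ind_of_mem hy.1 hy.2]; ring
      · rw [gg_value_negone 0 _ _ hyb hy.2 hpos.le, ind_of_mem hy.1 hy.2]; ring
    · rw [gg_value_zero 0 _ _ hy hpos.le hbc, ind_of_not_mem hy, zero_mul]
  simp only [hpt]
  rw [integral_ind, sub_zero, max_eq_left (two_zpow_pos _).le]

/-- the test function -/
def fN (N : ℕ) (x : ℝ) : ℝ :=
  ∑ j ∈ Finset.range N, (-1:ℝ)^j * gg 0 ((2:ℝ)^(-(j:ℤ)-1)) ((2:ℝ)^(-(j:ℤ))) x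

omit hp in
lemma measurable_fN (N : ℕ) : Measurable (fN N) :=
  Finset.measurable_sum (f := fun (j : ℕ) x => (-1:ℝ)^j * gg 0 ((2:ℝ)^(-(j:ℤ)-1)) ((2:ℝ)^(-(j:ℤ))) x) _
    (fun j _ => (gg_measurable _ _ _).const_mul _)

omit hp in
lemma haar_eq (j : ℕ) (y : ℝ) :
    haar (j:ℤ) 0 y = (2:ℝ)^((((j:ℤ)):ℝ)/2) * gg 0 ((2:ℝ)^(-(j:ℤ)-1)) ((2:ℝ)^(-(j:ℤ))) y := by
  unfold haar gg ind
  have h1 : (2:ℝ)^(-(j:ℤ)) * ((0:ℤ):ℝ) = 0 := by norm_num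
  have h2 : (2:ℝ)^(-(j:ℤ)) * (((0:ℤ):ℝ) + 1/2) = 2^(-(j:ℤ)-1) := by
    rw [show (-(j:ℤ)-1) = -(j:ℤ) + (-1) by ring, two_zpow_add]
    norm_num
  have h3 : (2:ℝ)^(-(j:ℤ)) * (((0:ℤ):ℝ) + 1) = 2^(-(j:ℤ)) := by norm_num
  rw [h1, h2, h3]

omit hp in
lemma haar_coef (N : ℕ) {j : ℕ} (hj : j < N) :
    ∫ y, haar (j:ℤ) 0 y * fN N y
      = (-1:ℝ)^j * ((2:ℝ)^((((j:ℤ)):ℝ)/2) * (2:ℝ)^(-(j:ℤ))) := by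
  have hre : (fun y => haar (j:ℤ) 0 y * fN N y)
      = fun y => ∑ i ∈ Finset.range N, ((2:ℝ)^((((j:ℤ)):ℝ)/2) * (-1:ℝ)^i)
          * (gg 0 ((2:ℝ)^(-(j:ℤ)-1)) ((2:ℝ)^(-(j:ℤ))) y
             * gg 0 ((2:ℝ)^(-(i:ℤ)-1)) ((2:ℝ)^(-(i:ℤ))) y) := by
    funext y
    rw [haar_eq j y]
    unfold fN
    rw [Finset.mul_sum]
    apply Finset.sum_congr rfl
    intro i _
    ring
  rw [hre, integral_finset_sum _ (fun i _ => (gg_mul_integrable _ _ _ _ _ _).const_mul _)]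
  have hterm : ∀ i ∈ Finset.range N,
      ∫ y, ((2:ℝ)^((((j:ℤ)):ℝ)/2) * (-1:ℝ)^i)
          * (gg 0 ((2:ℝ)^(-(j:ℤ)-1)) ((2:ℝ)^(-(j:ℤ))) y
             * gg 0 ((2:ℝ)^(-(i:ℤ)-1)) ((2:ℝ)^(-(i:ℤ))) y)
        = if i = j then (-1:ℝ)^j * ((2:ℝ)^((((j:ℤ)):ℝ)/2) * (2:ℝ)^(-(j:ℤ))) else 0 := by
    intro i _
    rw [MeasureTheory.integral_const_mul]
    by_cases hij : i = j
    · subst hij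
      rw [gg_self i, if_pos rfl]
      ring
    · rw [gg_orth hij, if_neg hij, mul_zero]
  rw [Finset.sum_congr rfl hterm, Finset.sum_ite_eq' (Finset.range N) j
    (fun _ => (-1:ℝ)^j * ((2:ℝ)^((((j:ℤ)):ℝ)/2) * (2:ℝ)^(-(j:ℤ))))]
  rw [if_pos (Finset.mem_range.2 hj)]

omit hp in
lemma coef_sq (N : ℕ) {j : ℕ} (hj : j < N) :
    (volume (dyadicI (j:ℤ) 0))⁻¹ * ((‖∫ y, haar (j:ℤ) 0 y * fN N y‖₊ : ℝ≥0∞)) ^ 2 = 1 := by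
  rw [haar_coef N hj]
  have hnorm : ‖(-1:ℝ)^j * ((2:ℝ)^((((j:ℤ)):ℝ)/2) * (2:ℝ)^(-(j:ℤ)))‖
      = (2:ℝ)^((((j:ℤ)):ℝ)/2) * (2:ℝ)^(-(j:ℤ)) := by
    rw [norm_mul, norm_pow, norm_neg, norm_one, one_pow, one_mul]
    apply abs_of_pos
    positivity
  have hsq : (‖(-1:ℝ)^j * ((2:ℝ)^((((j:ℤ)):ℝ)/2) * (2:ℝ)^(-(j:ℤ)))‖ : ℝ)^2 = (2:ℝ)^(-(j:ℤ)) := by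
    rw [hnorm]
    rw [mul_pow]
    have hhalf : ((2:ℝ)^((((j:ℤ)):ℝ)/2))^2 = (2:ℝ)^(j:ℤ) := by
      rw [← Real.rpow_natCast ((2:ℝ)^((((j:ℤ)):ℝ)/2)) 2, ← Real.rpow_mul (by norm_num)]
      rw [show ((((j:ℤ)):ℝ)/2) * (2:ℕ) = (((j:ℤ)):ℝ) by push_cast; ring]
      rw [Real.rpow_intCast]
    rw [hhalf, show ((2:ℝ)^(-(j:ℤ)))^2 = 2^(-(j:ℤ)) * 2^(-(j:ℤ)) by ring, ← two_zpow_add,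
      ← two_zpow_add]
    congr 1
    ring
  have hcoe : ((‖(-1:ℝ)^j * ((2:ℝ)^((((j:ℤ)):ℝ)/2) * (2:ℝ)^(-(j:ℤ)))‖₊ : ℝ≥0∞)) ^ 2
      = e2 ((-(j:ℤ) : ℤ)) := by
    rw [← ENNReal.ofReal_coe_nnreal, coe_nnnorm, ← ENNReal.ofReal_pow (norm_nonneg _), hsq, ofReal_two_zpow]
  rw [hcoe, dyadic_vol, ← e2_neg]
  rw [show (-((-(j:ℤ) : ℤ) : ℝ)) = ((j:ℤ) : ℝ) by push_cast; ring]
  rw [show (((-(j:ℤ) : ℤ)) : ℝ) = -((j:ℤ) : ℝ) by push_cast; ring]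
  exact e2_mul_inv_self _

omit hp in
lemma haarSq_lower (N : ℕ) {x : ℝ} (hx0 : 0 ≤ x) (hx : x < (2:ℝ)^(-(N:ℤ))) :
    ((N:ℝ≥0∞))^(1/2:ℝ) ≤ haarSq (fN N) x := by
  unfold haarSq
  apply ENNReal.rpow_le_rpow _ (by norm_num : (0:ℝ) ≤ 1/2)
  have hemb : Function.Injective (fun j : ℕ => ((j:ℤ), (0:ℤ))) := by
    intro a b h
    simpa using h
  calc (N:ℝ≥0∞) = ∑ j ∈ Finset.range N, 1 := by
        rw [Finset.sum_const, Finset.card_range, nsmul_eq_mul, mul_one]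
  _ = ∑ km ∈ (Finset.range N).map ⟨fun j : ℕ => ((j:ℤ), (0:ℤ)), hemb⟩,
        (dyadicI km.1 km.2).indicator
          (fun _ => (volume (dyadicI km.1 km.2))⁻¹ *
            (‖∫ y, haar km.1 km.2 y * fN N y‖₊ : ℝ≥0∞) ^ 2) x := by
      rw [Finset.sum_map]
      apply Finset.sum_congr rfl
      intro j hj
      simp only [Function.Embedding.coeFn_mk]
      have hmem : x ∈ dyadicI (j:ℤ) 0 := by
        rw [dyadicI_zero]
        exact ⟨hx0, lt_of_lt_of_le hx (two_zpow_mono (by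
          have := Finset.mem_range.1 hj
          omega))⟩
      rw [Set.indicator_of_mem hmem, coef_sq N (Finset.mem_range.1 hj)]
  _ ≤ _ := ENNReal.sum_le_tsum _

omit hp in
lemma fN_outside (N : ℕ) {x : ℝ} (hx : ¬ (0 ≤ x ∧ x < 1)) : fN N x = 0 := by
  unfold fN
  apply Finset.sum_eq_zero
  intro j _
  rw [gg_value_zero 0 _ _ _ (two_zpow_pos _).le (two_zpow_mono (by omega))]
  · ring
  · intro ⟨h0, hj⟩
    exact hx ⟨h0, lt_of_lt_of_le hj (two_zpow_le_one j)⟩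

omit hp in
lemma abs_fN_le_two (N : ℕ) (x : ℝ) : |fN N x| ≤ 2 := by
  by_cases hx : 0 ≤ x ∧ x < 1
  swap
  · rw [fN_outside N hx]; norm_num
  obtain ⟨hx0, hx1⟩ := hx
  have hgeom : ∀ n : ℕ, |∑ j ∈ Finset.range n, (-1:ℝ)^j| ≤ 1 := by
    intro n
    rw [neg_one_geom_sum]
    split_ifs <;> norm_num
  by_cases htail : x < (2:ℝ)^(-(N:ℤ))
  · have : fN N x = ∑ j ∈ Finset.range N, (-1:ℝ)^j := by
      unfold fN
      apply Finset.sum_congr rfl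
      intro j hj
      rw [gg_value_one 0 _ _ hx0 (lt_of_lt_of_le htail (two_zpow_mono (by
        have := Finset.mem_range.1 hj; omega))) (two_zpow_mono (by omega)), mul_one]
    rw [this]
    exact le_trans (hgeom N) (by norm_num)
  push_neg at htail
  -- x in some ring n with n < N
  have hxpos : 0 < x := lt_of_lt_of_le (two_zpow_pos _) htail
  set L : ℤ := Int.log 2 x with hL
  have hL1 : (2:ℝ)^L ≤ x := Int.zpow_log_le_self (by norm_num) hxpos
  have hL2 : x < (2:ℝ)^(L+1) := Int.lt_zpow_succ_log_self (by norm_num) x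
  have hLneg : L < 0 := by
    by_contra hc
    push_neg at hc
    have : (1:ℝ) ≤ (2:ℝ)^L := by
      calc (1:ℝ) = 2^(0:ℤ) := by norm_num
      _ ≤ 2^L := two_zpow_mono hc
    linarith
  have hLN : -(N:ℤ) ≤ L := by
    by_contra hc
    push_neg at hc
    have : (2:ℝ)^(L+1) ≤ 2^(-(N:ℤ)) := two_zpow_mono (by omega)
    linarith
  set n : ℕ := (-L-1).toNat with hn
  have hnL : (n:ℤ) = -L-1 := Int.toNat_of_nonneg (by omega)
  have hnN : n < N := by omega
  have hring1 : (2:ℝ)^(-(n:ℤ)-1) ≤ x := by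
    rw [show (-(n:ℤ)-1) = L by omega]
    exact hL1
  have hring2 : x < (2:ℝ)^(-(n:ℤ)) := by
    rw [show (-(n:ℤ)) = L+1 by omega]
    exact hL2
  have hsum : fN N x = (∑ j ∈ Finset.range n, (-1:ℝ)^j) + (-1:ℝ)^n * (-1) := by
    unfold fN
    rw [← Finset.sum_range_add_sum_Ico _ (by omega : n+1 ≤ N)]
    have h2 : ∑ j ∈ Finset.Ico (n+1) N,
        (-1:ℝ)^j * gg 0 ((2:ℝ)^(-(j:ℤ)-1)) ((2:ℝ)^(-(j:ℤ))) x = 0 := by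
      apply Finset.sum_eq_zero
      intro j hj
      have hj1 := (Finset.mem_Ico.1 hj).1
      rw [gg_value_zero 0 _ _ _ (two_zpow_pos _).le (two_zpow_mono (by omega))]
      · ring
      · intro ⟨_, hlt⟩
        have : (2:ℝ)^(-(j:ℤ)) ≤ 2^(-(n:ℤ)-1) := two_zpow_mono (by omega)
        linarith
    rw [h2, add_zero, Finset.sum_range_succ]
    congr 1
    · apply Finset.sum_congr rfl
      intro j hj
      have hj1 := Finset.mem_range.1 hj
      rw [gg_value_one 0 _ _ hx0 (lt_of_lt_of_le hring2 (two_zpow_mono (by omega)))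
        (two_zpow_mono (by omega)), mul_one]
    · rw [gg_value_negone 0 _ _ hring1 hring2 (two_zpow_pos _).le]
  rw [hsum]
  calc |(∑ j ∈ Finset.range n, (-1:ℝ)^j) + (-1:ℝ)^n * (-1)|
      ≤ |∑ j ∈ Finset.range n, (-1:ℝ)^j| + |(-1:ℝ)^n * (-1)| := abs_add_le _ _
  _ ≤ 1 + 1 := by
      apply add_le_add (hgeom n)
      rw [abs_mul, abs_pow, abs_neg, abs_one, one_pow, one_mul]
  _ = 2 := by norm_num

lemma lp_fN_le (N : ℕ) : lpNorm1 p (wN N) (fN N) ≤ 2 * ((N:ℝ≥0∞))^(1/p:ℝ) := by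
  have hp0 : (0:ℝ) < p := by linarith
  unfold lpNorm1
  have hpt : ∀ x, (‖fN N x‖₊ : ℝ≥0∞)^(p:ℝ) * wN N x
      ≤ (Set.Ico (0:ℝ) 1).indicator (fun y => e2 p * wN N y) x := by
    intro x
    by_cases hx : x ∈ Set.Ico (0:ℝ) 1
    · rw [Set.indicator_of_mem hx]
      apply mul_le_mul' _ (le_refl _)
      have h2 : (‖fN N x‖₊ : ℝ≥0∞) ≤ 2 := by
        rw [← ENNReal.ofReal_coe_nnreal, coe_nnnorm]
        calc ENNReal.ofReal ‖fN N x‖ ≤ ENNReal.ofReal 2 :=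
              ENNReal.ofReal_le_ofReal (by simpa using abs_fN_le_two N x)
        _ = 2 := by norm_num
      calc (‖fN N x‖₊ : ℝ≥0∞)^(p:ℝ) ≤ (2:ℝ≥0∞)^(p:ℝ) := ENNReal.rpow_le_rpow h2 hp0.le
      _ = e2 p := rfl
    · have : fN N x = 0 := fN_outside N (fun h => hx ⟨h.1, h.2⟩)
      rw [this, Set.indicator_of_notMem hx]
      simp only [nnnorm_zero, ENNReal.coe_zero]
      rw [ENNReal.zero_rpow_of_pos hp0, zero_mul]
  calc (∫⁻ x, (‖fN N x‖₊ : ℝ≥0∞)^(p:ℝ) * wN N x) ^ (1/p:ℝ)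
      ≤ (∫⁻ x, (Set.Ico (0:ℝ) 1).indicator (fun y => e2 p * wN N y) x) ^ (1/p:ℝ) := by
        apply ENNReal.rpow_le_rpow (lintegral_mono hpt) (by positivity)
  _ = (e2 p * ∫⁻ x in Set.Ico (0:ℝ) 1, wN N x) ^ (1/p:ℝ) := by
        rw [lintegral_indicator measurableSet_Ico,
          lintegral_const_mul _ (measurable_wN N)]
  _ = (e2 p * (N:ℝ≥0∞)) ^ (1/p:ℝ) := by rw [wN_int_Ico01 N]
  _ = 2 * ((N:ℝ≥0∞))^(1/p:ℝ) := by
        rw [ENNReal.mul_rpow_of_ne_top (e2_ne_top _) (natCast_ne_top N), e2_rpow,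
          mul_one_div_cancel (by linarith : p ≠ 0)]
        congr 1
        rw [e2]
        exact ENNReal.rpow_one 2

lemma lp_fN_ne_top (N : ℕ) : lpNorm1 p (wN N) (fN N) ≠ ∞ := by
  apply ne_top_of_le_ne_top _ (lp_fN_le hp N)
  exact ENNReal.mul_ne_top (by norm_num)
    (ENNReal.rpow_ne_top_of_nonneg (by positivity) (natCast_ne_top N))

omit hp in
lemma wN_tail_mass (N : ℕ) :
    ∫⁻ x in Set.Ico (0:ℝ) ((2:ℝ)^(-(N:ℤ))), wN N x = (N:ℝ≥0∞) * 2⁻¹ := by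
  rw [setl_const measurableSet_Ico (fun x hx => wN_of_tail N hx.1 hx.2)]
  rw [Real.volume_Ico, sub_zero, ofReal_two_zpow]
  unfold tailC
  rw [e2_zpow, mul_assoc, ← e2_add]
  rw [show ((((N:ℤ)-1 : ℤ)):ℝ) + ((-(N:ℤ) : ℤ):ℝ) = (-1:ℝ) by push_cast; ring]
  congr 1
  rw [e2]
  exact ENNReal.rpow_neg_one 2

lemma wlp_lower (N : ℕ) (hN : 1 ≤ N) :
    ((N:ℝ≥0∞))^(1/2:ℝ) * 2⁻¹ * (((N:ℝ≥0∞) * 2⁻¹)^(1/p:ℝ))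
      ≤ wLpNorm1 p (wN N) (haarSq (fN N)) := by
  have hN0 : (0:ℝ≥0) < (N:ℝ≥0) := by
    have : (0:ℕ) < N := by omega
    exact_mod_cast this
  set t : ℝ≥0 := (N:ℝ≥0)^((1/2:ℝ)) / 2 with ht
  have htpos : 0 < t := div_pos (NNReal.rpow_pos hN0) two_pos
  have hNcast : ((N:ℝ≥0) : ℝ≥0∞) = (N:ℝ≥0∞) := by
    simp
  have hcoe : (t : ℝ≥0∞) = (N:ℝ≥0∞)^(1/2:ℝ) * 2⁻¹ := by
    rw [ht, ENNReal.coe_div (by norm_num : (2:ℝ≥0) ≠ 0),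
      ENNReal.coe_rpow_of_ne_zero hN0.ne', hNcast, div_eq_mul_inv]
    norm_num
  have hne0 : (N:ℝ≥0∞)^(1/2:ℝ) ≠ 0 := by
    apply (ENNReal.rpow_pos _ (natCast_ne_top N)).ne'
    exact_mod_cast (by omega : 0 < N)
  have hnetop : (N:ℝ≥0∞)^(1/2:ℝ) ≠ ∞ :=
    ENNReal.rpow_ne_top_of_nonneg (by norm_num) (natCast_ne_top N)
  have hlt : (t:ℝ≥0∞) < (N:ℝ≥0∞)^(1/2:ℝ) := by
    rw [hcoe]
    calc (N:ℝ≥0∞)^(1/2:ℝ) * 2⁻¹ < (N:ℝ≥0∞)^(1/2:ℝ) * 1 := by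
          rw [ENNReal.mul_lt_mul_iff_right hne0 hnetop]
          norm_num
    _ = (N:ℝ≥0∞)^(1/2:ℝ) := mul_one _
  have hsub : Set.Ico (0:ℝ) ((2:ℝ)^(-(N:ℤ))) ⊆ {x | (t:ℝ≥0∞) < haarSq (fN N) x} := by
    intro x hx
    exact lt_of_lt_of_le hlt (haarSq_lower N hx.1 hx.2)
  calc ((N:ℝ≥0∞))^(1/2:ℝ) * 2⁻¹ * (((N:ℝ≥0∞) * 2⁻¹)^(1/p:ℝ))
      = (t:ℝ≥0∞) * (((N:ℝ≥0∞) * 2⁻¹)^(1/p:ℝ)) := by rw [hcoe]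
  _ = (t:ℝ≥0∞) * ((∫⁻ x in Set.Ico (0:ℝ) ((2:ℝ)^(-(N:ℤ))), wN N x)^(1/p:ℝ)) := by
        rw [wN_tail_mass N]
  _ ≤ (t:ℝ≥0∞) * ((∫⁻ x in {x | (t:ℝ≥0∞) < haarSq (fN N) x}, wN N x)^(1/p:ℝ)) := by
        apply mul_le_mul' (le_refl _)
        apply ENNReal.rpow_le_rpow (lintegral_mono_set hsub) (by positivity)
  _ ≤ wLpNorm1 p (wN N) (haarSq (fN N)) := by
        apply le_iSup₂ (f := fun (t : ℝ≥0) (_ : 0 < t) =>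
          (t : ℝ≥0∞) * (∫⁻ x in {x | (t : ℝ≥0∞) < haarSq (fN N) x}, wN N x) ^ (1/p:ℝ)) t htpos

lemma sqOp_lower (N : ℕ) (hN : 1 ≤ N) :
    (N:ℝ≥0∞)^(1/2:ℝ) * 8⁻¹ ≤ sqOpNorm p (wN N) := by
  unfold sqOpNorm
  apply le_sInf
  intro C hC
  have h := hC (fN N) (measurable_fN N) (lp_fN_ne_top hp N)
  have hNp0 : (N:ℝ≥0∞)^(1/p:ℝ) ≠ 0 := by
    apply (ENNReal.rpow_pos _ (natCast_ne_top N)).ne'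
    exact_mod_cast (by omega : 0 < N)
  have hNptop : (N:ℝ≥0∞)^(1/p:ℝ) ≠ ∞ :=
    ENNReal.rpow_ne_top_of_nonneg (by positivity) (natCast_ne_top N)
  have hkey : ((N:ℝ≥0∞)^(1/2:ℝ) * 8⁻¹) * (2 * (N:ℝ≥0∞)^(1/p:ℝ))
      ≤ C * (2 * (N:ℝ≥0∞)^(1/p:ℝ)) := by
    have hhalf : (2:ℝ≥0∞)⁻¹ ≤ (2⁻¹:ℝ≥0∞)^(1/p:ℝ) := by
      calc (2:ℝ≥0∞)⁻¹ = (2⁻¹:ℝ≥0∞)^(1:ℝ) := (ENNReal.rpow_one _).symm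
      _ ≤ (2⁻¹:ℝ≥0∞)^(1/p:ℝ) := by
          apply ENNReal.rpow_le_rpow_of_exponent_ge (by norm_num)
          rw [div_le_one (by linarith)]
          linarith
    calc ((N:ℝ≥0∞)^(1/2:ℝ) * 8⁻¹) * (2 * (N:ℝ≥0∞)^(1/p:ℝ))
        = (N:ℝ≥0∞)^(1/2:ℝ) * 2⁻¹ * ((N:ℝ≥0∞)^(1/p:ℝ) * 2⁻¹) := by
          rw [show (8:ℝ≥0∞) = 2*2*2 by norm_num]
          rw [ENNReal.mul_inv (by norm_num) (by norm_num)]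
          rw [ENNReal.mul_inv (by norm_num) (by norm_num)]
          have hc : (2:ℝ≥0∞)⁻¹ * 2 = 1 := ENNReal.inv_mul_cancel (by norm_num) (by norm_num)
          calc (N:ℝ≥0∞)^(1/2:ℝ) * (2⁻¹*2⁻¹*2⁻¹) * (2 * (N:ℝ≥0∞)^(1/p:ℝ))
              = (N:ℝ≥0∞)^(1/2:ℝ) * 2⁻¹ * ((N:ℝ≥0∞)^(1/p:ℝ) * 2⁻¹) * (2⁻¹ * 2) := by ring
          _ = (N:ℝ≥0∞)^(1/2:ℝ) * 2⁻¹ * ((N:ℝ≥0∞)^(1/p:ℝ) * 2⁻¹) := by rw [hc, mul_one]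
    _ ≤ (N:ℝ≥0∞)^(1/2:ℝ) * 2⁻¹ * (((N:ℝ≥0∞) * 2⁻¹)^(1/p:ℝ)) := by
          apply mul_le_mul' (le_refl _)
          rw [ENNReal.mul_rpow_of_ne_top (natCast_ne_top N) (by norm_num)]
          exact mul_le_mul' (le_refl _) hhalf
    _ ≤ wLpNorm1 p (wN N) (haarSq (fN N)) := wlp_lower hp N hN
    _ ≤ C * lpNorm1 p (wN N) (fN N) := h
    _ ≤ C * (2 * (N:ℝ≥0∞)^(1/p:ℝ)) := mul_le_mul' (le_refl _) (lp_fN_le hp N)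
  have hfac0 : (2:ℝ≥0∞) * (N:ℝ≥0∞)^(1/p:ℝ) ≠ 0 := mul_ne_zero (by norm_num) hNp0
  have hfactop : (2:ℝ≥0∞) * (N:ℝ≥0∞)^(1/p:ℝ) ≠ ∞ :=
    ENNReal.mul_ne_top (by norm_num) hNptop
  exact (ENNReal.mul_le_mul_iff_left hfac0 hfactop).1 hkey

omit hp in
lemma indicator_le_const (s : Set ℝ) (c : ℝ≥0∞) (x : ℝ) :
    s.indicator (fun _ => c) x ≤ c := by
  by_cases h : x ∈ s
  · rw [Set.indicator_of_mem h]
  · rw [Set.indicator_of_notMem h]; exact bot_le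

omit hp in
lemma wN_le_const (N : ℕ) (x : ℝ) :
    wN N x ≤ 1 + 1 + tailC N + ∑ n ∈ Finset.range N, (2:ℝ≥0∞)^(n:ℤ) := by
  unfold wN
  apply add_le_add
  apply add_le_add
  apply add_le_add
  · exact indicator_le_const _ _ _
  · exact indicator_le_const _ _ _
  · exact indicator_le_const _ _ _
  · exact Finset.sum_le_sum (fun n _ => indicator_le_const _ _ _)

omit hp in
lemma wN_const_ne_top (N : ℕ) :
    (1 + 1 + tailC N + ∑ n ∈ Finset.range N, (2:ℝ≥0∞)^(n:ℤ)) ≠ ∞ := by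
  apply ENNReal.add_ne_top.2
  constructor
  · apply ENNReal.add_ne_top.2
    exact ⟨ENNReal.add_ne_top.2 ⟨by norm_num, by norm_num⟩, tailC_ne_top N⟩
  · apply ne_of_lt
    apply ENNReal.sum_lt_top.2
    intro n _
    rw [e2_zpow]
    exact (e2_ne_top _).lt_top

omit hp in
lemma wN_dyadic_finite (N : ℕ) (k m : ℤ) : ∫⁻ x in dyadicI k m, wN N x < ∞ := by
  calc ∫⁻ x in dyadicI k m, wN N x
      ≤ ∫⁻ _ in dyadicI k m, (1 + 1 + tailC N + ∑ n ∈ Finset.range N, (2:ℝ≥0∞)^(n:ℤ)) :=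
        setLIntegral_mono' measurableSet_Ico (fun x _ => wN_le_const N x)
  _ = (1 + 1 + tailC N + ∑ n ∈ Finset.range N, (2:ℝ≥0∞)^(n:ℤ)) * volume (dyadicI k m) := by
        rw [setLIntegral_const]
  _ < ∞ := ENNReal.mul_lt_top (wN_const_ne_top N).lt_top (by rw [dyadic_vol]; exact (e2_ne_top _).lt_top)

end withp
/-- Proposition 5.2: if `‖S‖_{L^p(w)→L^{p,∞}(w)} ≤ Φ([w]_{A_p})` for an increasing
`Φ : (0,∞) → (0,∞)` and all `w ∈ A_p`, then `Φ(t) ≥ c t^{1/2}` for all large `t`,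
with `c, t₀` depending only on `p`. -/
theorem statement17 (p : ℝ) (hp : 1 < p) :
    ∃ c t₀ : ℝ, 0 < c ∧ 0 < t₀ ∧
      ∀ Φ : ℝ → ℝ,
        (∀ s t : ℝ, 0 < s → s ≤ t → Φ s ≤ Φ t) →
        (∀ t : ℝ, 0 < t → 0 < Φ t) →
        (∀ w : ℝ → ℝ≥0∞, Measurable w →
          (∀ k m : ℤ, (∫⁻ x in dyadicI k m, w x) < ∞) →
          Ap1 p w < ∞ →
          sqOpNorm p w ≤ ENNReal.ofReal (Φ (Ap1 p w).toReal)) →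
        ∀ t : ℝ, t₀ ≤ t → c * t ^ (1/2 : ℝ) ≤ Φ t := by
  set CE : ℝ := (Cp p).toReal with hCE
  have hCE0 : 0 ≤ CE := ENNReal.toReal_nonneg
  have hCE1 : (0:ℝ) < CE + 1 := by linarith
  refine ⟨1/(8 * (2*(CE+1))^((1/2):ℝ)), 2*(CE+1), by positivity, by positivity, ?_⟩
  intro Φ hmono hpos hbound t ht
  set N : ℕ := ⌊t/(CE+1)⌋₊ with hNdef
  have htpos : 0 < t := lt_of_lt_of_le (by positivity) ht
  have hx2 : 2 ≤ t/(CE+1) := (le_div_iff₀ hCE1).2 (by linarith)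
  have hN2 : 2 ≤ N := Nat.le_floor (by exact_mod_cast hx2)
  have hN1 : 1 ≤ N := by omega
  have hApfin : Ap1 p (wN N) < ∞ :=
    lt_of_le_of_lt (Ap1_wN_le hp N hN1)
      (ENNReal.mul_lt_top (natCast_ne_top N).lt_top (Cp_ne_top hp).lt_top)
  have hw := hbound (wN N) (measurable_wN N) (fun k m => wN_dyadic_finite N k m) hApfin
  set a : ℝ := (Ap1 p (wN N)).toReal with ha
  have ha1 : 1 ≤ a := by
    rw [ha, ← ENNReal.toReal_one]
    exact ENNReal.toReal_mono hApfin.ne (one_le_Ap1_wN hp N)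
  have haN : a ≤ (N:ℝ) * CE := by
    rw [ha]
    calc (Ap1 p (wN N)).toReal ≤ ((N:ℝ≥0∞) * Cp p).toReal :=
          ENNReal.toReal_mono (ENNReal.mul_ne_top (natCast_ne_top N) (Cp_ne_top hp))
            (Ap1_wN_le hp N hN1)
    _ = (N:ℝ) * CE := by rw [ENNReal.toReal_mul]; simp [hCE]
  have hNle : (N:ℝ) ≤ t/(CE+1) := Nat.floor_le (by positivity)
  have hat : a ≤ t := by
    calc a ≤ (N:ℝ) * CE := haN
    _ ≤ (N:ℝ) * (CE+1) := by nlinarith [Nat.cast_nonneg (α := ℝ) N]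
    _ ≤ t := by
        have := (div_le_iff₀ hCE1).1 (le_refl (t/(CE+1)))
        calc (N:ℝ) * (CE+1) ≤ (t/(CE+1)) * (CE+1) :=
              mul_le_mul_of_nonneg_right hNle hCE1.le
        _ = t := div_mul_cancel₀ t hCE1.ne'
  have hofr : ENNReal.ofReal ((N:ℝ)^(1/2:ℝ)/8) ≤ ENNReal.ofReal (Φ a) := by
    calc ENNReal.ofReal ((N:ℝ)^(1/2:ℝ)/8) = (N:ℝ≥0∞)^(1/2:ℝ) * 8⁻¹ := by
          rw [ENNReal.ofReal_div_of_pos (by norm_num),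
            ← ENNReal.ofReal_rpow_of_nonneg (Nat.cast_nonneg N) (by norm_num),
            ENNReal.ofReal_natCast, div_eq_mul_inv]
          norm_num
    _ ≤ sqOpNorm p (wN N) := sqOp_lower hp N hN1
    _ ≤ ENNReal.ofReal (Φ a) := hw
  have hΦa : (N:ℝ)^(1/2:ℝ)/8 ≤ Φ a := by
    have hpa : 0 < Φ a := hpos a (by linarith)
    exact (ENNReal.ofReal_le_ofReal_iff hpa.le).1 hofr
  have hmon := hmono a t (by linarith) hat
  have hNge : t/(2*(CE+1)) ≤ (N:ℝ) := by
    have h1 : t/(CE+1) < N + 1 := Nat.lt_floor_add_one _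
    rw [show 2*(CE+1) = (CE+1)*2 by ring, ← div_div]
    linarith
  have hrp : (t/(2*(CE+1)))^(1/2:ℝ) ≤ (N:ℝ)^(1/2:ℝ) :=
    Real.rpow_le_rpow (by positivity) hNge (by norm_num)
  have hsplit : (t/(2*(CE+1)))^(1/2:ℝ) = t^(1/2:ℝ)/((2*(CE+1))^(1/2:ℝ)) :=
    Real.div_rpow htpos.le (by positivity : (0:ℝ) ≤ 2*(CE+1)) (1/2)
  have hden : (0:ℝ) < (2*(CE+1))^(1/2:ℝ) := Real.rpow_pos_of_pos (by linarith) _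
  calc (1/(8 * (2*(CE+1))^((1/2):ℝ))) * t^(1/2:ℝ)
      = (t^(1/2:ℝ)/((2*(CE+1))^(1/2:ℝ)))/8 := by
        rw [div_div, one_div, ← div_eq_inv_mul, mul_comm 8 ((2*(CE+1))^(1/2:ℝ))]
  _ ≤ (N:ℝ)^(1/2:ℝ)/8 := by
        rw [← hsplit]
        linarith
  _ ≤ Φ a := hΦa
  _ ≤ Φ t := hmon

end Paper1D
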